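/- Let U be an adapted integrable process in discrete time over {0,...,T} and let Z be its Snell envelope, defined by Z_T = U_T and Z_t = max(U_t, E[Z_{t+1} | F_t]). Then for every stopping time θ with values in {0,...,T}, Z_θ = ess sup over stopping times τ ≥ θ of E[U_τ | F_θ] almost surely. -/

import Mathlib

open MeasureTheory Filter

/-- The discrete-time Snell envelope over `{0,…,T}`, defined by backward
recursion `Z_T = U_T`, `Z_t = max (U_t) (E[Z_{t+1} | ℱ_t])`. -/
noncomputable def snellAux {Ω : Type*} {m0 : MeasurableSpace Ω} (μ : Measure Ω)
    (ℱ : MeasureTheory.Filtration ℕ m0) (U : ℕ → Ω → ℝ) (T : ℕ) : ℕ → Ω → ℝ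
  | 0 => U T
  | (k + 1) => fun ω =>
      max (U (T - (k + 1)) ω) ((μ[snellAux μ ℱ U T k | ℱ (T - (k + 1))]) ω)

noncomputable def snell {Ω : Type*} {m0 : MeasurableSpace Ω} (μ : Measure Ω)
    (ℱ : MeasureTheory.Filtration ℕ m0) (U : ℕ → Ω → ℝ) (T : ℕ) (t : ℕ) : Ω → ℝ :=
  snellAux μ ℱ U T (T - t)

section Aux

variable {Ω : Type*} {m0 : MeasurableSpace Ω} (μ : Measure Ω)
    (ℱ : MeasureTheory.Filtration ℕ m0) (U : ℕ → Ω → ℝ) (T : ℕ)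

lemma snell_of_le {t : ℕ} (ht : T ≤ t) : snell μ ℱ U T t = U T := by
  simp only [snell, Nat.sub_eq_zero_of_le ht, snellAux]

lemma snell_succ {t : ℕ} (ht : t < T) :
    snell μ ℱ U T t = fun ω => max (U t ω) ((μ[snell μ ℱ U T (t + 1) | ℱ t]) ω) := by
  have h1 : T - t = (T - (t + 1)) + 1 := by omega
  have h2 : T - ((T - (t + 1)) + 1) = t := by omega
  rw [snell, h1]
  show snellAux μ ℱ U T ((T - (t + 1)) + 1) = _
  rw [snellAux, h2]
  rfl

lemma snell_adapted (hadp : Adapted ℱ U) : Adapted ℱ (snell μ ℱ U T) := by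
  have h : ∀ k, StronglyMeasurable[ℱ (T - k)] (snellAux μ ℱ U T k) := by
    intro k
    induction k with
    | zero => simpa [snellAux] using (hadp T).stronglyMeasurable
    | succ k ih =>
      rw [snellAux]
      have h2 : StronglyMeasurable[ℱ (T - (k+1))] (μ[snellAux μ ℱ U T k | ℱ (T - (k+1))]) :=
        stronglyMeasurable_condExp
      have := @StronglyMeasurable.sup Ω ℝ _ _ (ℱ (T - (k+1))) _ _ _ (hadp (T - (k+1))).stronglyMeasurable h2
      exact this
  intro t
  exact ((h (T - t)).mono (ℱ.mono (by omega : T - (T - t) ≤ t))).measurable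

lemma snell_integrable (hint : ∀ t, Integrable (U t) μ) (t : ℕ) :
    Integrable (snell μ ℱ U T t) μ := by
  have h : ∀ k, Integrable (snellAux μ ℱ U T k) μ := by
    intro k
    induction k with
    | zero => simpa [snellAux] using hint T
    | succ k ih =>
      rw [snellAux]
      have h2 : Integrable (μ[snellAux μ ℱ U T k | ℱ (T - (k+1))]) μ := integrable_condExp
      have := Integrable.sup (hint (T - (k + 1))) h2
      exact this
  exact h (T - t)

variable {μ ℱ U T}

lemma snell_U_le (t : ℕ) (ht : t ≤ T) (ω : Ω) : U t ω ≤ snell μ ℱ U T t ω := by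
  rcases eq_or_lt_of_le ht with h | h
  · subst h; rw [snell_of_le μ ℱ U t le_rfl]
  · rw [snell_succ μ ℱ U T h]; exact le_max_left _ _

lemma snell_condexp_le (t : ℕ) (ht : t < T) (ω : Ω) :
    (μ[snell μ ℱ U T (t + 1) | ℱ t]) ω ≤ snell μ ℱ U T t ω := by
  conv_rhs => rw [snell_succ μ ℱ U T ht]
  exact le_max_right _ _

lemma snell_eq_condexp_of_ne (t : ℕ) (ht : t < T) (ω : Ω)
    (hne : snell μ ℱ U T t ω ≠ U t ω) :
    snell μ ℱ U T t ω = (μ[snell μ ℱ U T (t + 1) | ℱ t]) ω := by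
  rw [snell_succ μ ℱ U T ht] at hne ⊢
  rcases max_choice (U t ω) ((μ[snell μ ℱ U T (t + 1) | ℱ t]) ω) with h | h
  · exact absurd h hne
  · exact h

/-- Key set-integral estimate for the Snell envelope at stopping times. -/
lemma snell_key [IsProbabilityMeasure μ] (hadp : Adapted ℱ U)
    (hint : ∀ t, Integrable (U t) μ)
    {θ τ : Ω → ℕ} (hθ : IsStoppingTime ℱ (fun ω => (θ ω : WithTop ℕ)))
    (hτ : IsStoppingTime ℱ (fun ω => (τ ω : WithTop ℕ)))
    (hθτ : ∀ ω, θ ω ≤ τ ω) (hτT : ∀ ω, τ ω ≤ T)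
    {A : Set Ω} (hA : MeasurableSet[hθ.measurableSpace] A) :
    (∫ ω in A, stoppedValue (snell μ ℱ U T) (fun ω => (τ ω : WithTop ℕ)) ω ∂μ
      ≤ ∫ ω in A, stoppedValue (snell μ ℱ U T) (fun ω => (θ ω : WithTop ℕ)) ω ∂μ) ∧
    ((∀ ω t, θ ω ≤ t → t < τ ω →
        snell μ ℱ U T t ω = (μ[snell μ ℱ U T (t + 1) | ℱ t]) ω) →
      ∫ ω in A, stoppedValue (snell μ ℱ U T) (fun ω => (τ ω : WithTop ℕ)) ω ∂μ
        = ∫ ω in A, stoppedValue (snell μ ℱ U T) (fun ω => (θ ω : WithTop ℕ)) ω ∂μ) := by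
  set Z : ℕ → Ω → ℝ := snell μ ℱ U T with hZdef
  have hZint : ∀ t, Integrable (Z t) μ := fun t => snell_integrable μ ℱ U T hint t
  have hθT : ∀ ω, θ ω ≤ T := fun ω => le_trans (hθτ ω) (hτT ω)
  have hAmeas : MeasurableSet A := hθ.measurableSpace_le _ hA
  -- the increment sets
  set C : ℕ → Set Ω := fun i => {ω | θ ω ≤ i ∧ i < τ ω} with hCdef
  have hCm : ∀ i, MeasurableSet (C i) := by
    intro i
    have h1 : MeasurableSet {ω | θ ω ≤ i} := ℱ.le i _ (show MeasurableSet[ℱ i] {ω | θ ω ≤ i} by simpa using hθ i)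
    have h2 : MeasurableSet {ω | τ ω ≤ i} := ℱ.le i _ (show MeasurableSet[ℱ i] {ω | τ ω ≤ i} by simpa using hτ i)
    have : C i = {ω | θ ω ≤ i} ∩ {ω | τ ω ≤ i}ᶜ := by
      ext ω; simp [hCdef, not_le]
    rw [this]; exact h1.inter h2.compl
  have hBm : ∀ i, MeasurableSet[ℱ i] ((A ∩ C i)) := by
    intro i
    have h1 : MeasurableSet[ℱ i] (A ∩ {ω | θ ω ≤ i}) := by simpa using ((hθ.measurableSet A).mp hA).2 i
    have h2 : MeasurableSet[ℱ i] ({ω | τ ω ≤ i}ᶜ) := (show MeasurableSet[ℱ i] {ω | τ ω ≤ i} by simpa using hτ i).compl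
    have : A ∩ C i = (A ∩ {ω | θ ω ≤ i}) ∩ {ω | τ ω ≤ i}ᶜ := by
      ext ω; simp [hCdef, not_le]; tauto
    rw [this]; exact h1.inter h2
  -- each summand
  have hterm : ∀ i, ∫ ω in A, (C i).indicator (Z (i + 1) - Z i) ω ∂μ
      = ∫ ω in A ∩ C i, ((μ[Z (i + 1) | ℱ i]) ω - Z i ω) ∂μ := by
    intro i
    rw [setIntegral_indicator (hCm i)]
    have hint1 : IntegrableOn (Z (i + 1)) (A ∩ C i) μ := (hZint (i + 1)).integrableOn
    have hint0 : IntegrableOn (Z i) (A ∩ C i) μ := (hZint i).integrableOn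
    have : ∫ ω in A ∩ C i, (Z (i + 1) - Z i) ω ∂μ
        = ∫ ω in A ∩ C i, Z (i + 1) ω ∂μ - ∫ ω in A ∩ C i, Z i ω ∂μ := by
      simp only [Pi.sub_apply]
      exact integral_sub hint1 hint0
    rw [this, ← setIntegral_condExp (ℱ.le i) (hZint (i + 1)) (hBm i)]
    have hintc : IntegrableOn (μ[Z (i + 1) | ℱ i]) (A ∩ C i) μ :=
      (integrable_condExp).integrableOn
    rw [← integral_sub hintc hint0]
  -- the telescoping identity
  have hsub := stoppedValue_sub_eq_sum' (u := Z) (τ := fun ω => (θ ω : WithTop ℕ))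
    (π := fun ω => (τ ω : WithTop ℕ)) (N := T) (fun ω => WithTop.coe_le_coe.mpr (hθτ ω))
    (fun ω => WithTop.coe_le_coe.mpr (hτT ω))
  have hsum : ∫ ω in A, stoppedValue Z (fun ω => (τ ω : WithTop ℕ)) ω ∂μ - ∫ ω in A, stoppedValue Z (fun ω => (θ ω : WithTop ℕ)) ω ∂μ
      = ∑ i ∈ Finset.range (T + 1), ∫ ω in A, (C i).indicator (Z (i + 1) - Z i) ω ∂μ := by
    have hi1 : IntegrableOn (stoppedValue Z (fun ω => (τ ω : WithTop ℕ))) A μ :=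
      (integrable_stoppedValue ℕ hτ hZint (N := T) (fun ω => by simpa using hτT ω)).integrableOn
    have hi2 : IntegrableOn (stoppedValue Z (fun ω => (θ ω : WithTop ℕ))) A μ :=
      (integrable_stoppedValue ℕ hθ hZint (N := T) (fun ω => by simpa using hθT ω)).integrableOn
    rw [← integral_sub hi1 hi2]
    have : ∀ ω, stoppedValue Z (fun ω => (τ ω : WithTop ℕ)) ω - stoppedValue Z (fun ω => (θ ω : WithTop ℕ)) ω
        = ∑ i ∈ Finset.range (T + 1), (C i).indicator (Z (i + 1) - Z i) ω := by
      intro ω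
      have := congrFun hsub ω
      rw [Pi.sub_apply, Finset.sum_apply] at this
      rw [this]
      refine Finset.sum_congr rfl fun i _ => ?_
      congr 1
      ext ω'
      exact and_congr WithTop.coe_le_coe WithTop.coe_lt_coe
    rw [integral_congr_ae (ae_of_all _ this)]
    exact integral_finset_sum _ fun i _ =>
      (((hZint (i + 1)).sub (hZint i)).indicator (hCm i)).integrableOn
  -- nonpositivity of each term
  have hle : ∀ i ∈ Finset.range (T + 1),
      ∫ ω in A, (C i).indicator (Z (i + 1) - Z i) ω ∂μ ≤ 0 := by
    intro i _
    rw [hterm i]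
    refine setIntegral_nonpos (hAmeas.inter (hCm i)) fun ω hω => ?_
    have hiT : i < T := lt_of_lt_of_le hω.2.2 (hτT ω)
    exact sub_nonpos.mpr (snell_condexp_le i hiT ω)
  constructor
  · have := Finset.sum_nonpos hle
    rw [← hsum] at this
    linarith
  · intro hP
    have hzz : ∀ i ∈ Finset.range (T + 1),
        ∫ ω in A, (C i).indicator (Z (i + 1) - Z i) ω ∂μ = 0 := by
      intro i _
      rw [hterm i]
      refine setIntegral_eq_zero_of_forall_eq_zero fun ω hω => ?_
      have := hP ω i hω.2.1 hω.2.2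
      rw [← this]; ring
    have := Finset.sum_eq_zero hzz
    rw [← hsum] at this
    linarith

end Aux

/-- Snell envelope as an essential supremum over stopping times: for every
stopping time `θ` with values in `{0,…,T}`, `Z_θ` is the least a.s. upper bound
of the family `E[U_τ | ℱ_θ]` over stopping times `θ ≤ τ ≤ T`, and the bound is
attained by some such stopping time. -/
theorem stmt8 {Ω : Type*} {m0 : MeasurableSpace Ω} (μ : Measure Ω) [IsProbabilityMeasure μ]
    (ℱ : MeasureTheory.Filtration ℕ m0) (T : ℕ)
    (U : ℕ → Ω → ℝ) (hadp : Adapted ℱ U) (hint : ∀ t, Integrable (U t) μ)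
    (θ : Ω → ℕ) (hθ : IsStoppingTime ℱ (fun ω => (θ ω : WithTop ℕ))) (hθT : ∀ ω, θ ω ≤ T) :
    (∀ τ : Ω → ℕ, (hτ : IsStoppingTime ℱ (fun ω => (τ ω : WithTop ℕ))) → (∀ ω, θ ω ≤ τ ω) → (∀ ω, τ ω ≤ T) →
        ∀ᵐ ω ∂μ, (μ[fun ω' => U (τ ω') ω' | hθ.measurableSpace]) ω
          ≤ snell μ ℱ U T (θ ω) ω) ∧
      ∃ τ : Ω → ℕ, ∃ hτ : IsStoppingTime ℱ (fun ω => (τ ω : WithTop ℕ)), (∀ ω, θ ω ≤ τ ω) ∧ (∀ ω, τ ω ≤ T) ∧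
        (fun ω => snell μ ℱ U T (θ ω) ω)
          =ᵐ[μ] μ[fun ω' => U (τ ω') ω' | hθ.measurableSpace] := by
  classical
  have hmle : hθ.measurableSpace ≤ m0 := hθ.measurableSpace_le
  set Z : ℕ → Ω → ℝ := snell μ ℱ U T with hZdef
  have hZadp : Adapted ℱ Z := snell_adapted μ ℱ U T hadp
  have hZint : ∀ t, Integrable (Z t) μ := fun t => snell_integrable μ ℱ U T hint t
  have hfmeas : StronglyMeasurable[hθ.measurableSpace] (stoppedValue Z (fun ω => (θ ω : WithTop ℕ))) :=
    (measurable_stoppedValue hZadp.stronglyAdapted.isStronglyProgressive_of_discrete hθ).stronglyMeasurable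
  have hfint : Integrable (stoppedValue Z (fun ω => (θ ω : WithTop ℕ))) μ := integrable_stoppedValue ℕ hθ hZint (N := T) (fun ω => by simpa using hθT ω)
  constructor
  · intro τ hτ hθτ hτT
    have hgint : Integrable (stoppedValue U (fun ω => (τ ω : WithTop ℕ))) μ := integrable_stoppedValue ℕ hτ hint (N := T) (fun ω => by simpa using hτT ω)
    have hcondmeas : StronglyMeasurable[hθ.measurableSpace]
        (μ[stoppedValue U (fun ω => (τ ω : WithTop ℕ)) | hθ.measurableSpace]) := stronglyMeasurable_condExp
    have hdmeas := hfmeas.sub hcondmeas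
    have hdint : Integrable (stoppedValue Z (fun ω => (θ ω : WithTop ℕ)) - μ[stoppedValue U (fun ω => (τ ω : WithTop ℕ)) | hθ.measurableSpace]) μ :=
      hfint.sub integrable_condExp
    have hd0 : (0 : Ω → ℝ)
        ≤ᵐ[μ] (stoppedValue Z (fun ω => (θ ω : WithTop ℕ)) - μ[stoppedValue U (fun ω => (τ ω : WithTop ℕ)) | hθ.measurableSpace]) := by
      refine ae_le_of_ae_le_trim (hm := hmle) ?_
      refine ae_nonneg_of_forall_setIntegral_nonneg (hdint.trim hmle hdmeas) ?_
      intro s hs _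
      rw [← setIntegral_trim hmle hdmeas hs]
      have h1 : ∫ ω in s, (stoppedValue Z (fun ω => (θ ω : WithTop ℕ)) - μ[stoppedValue U (fun ω => (τ ω : WithTop ℕ)) | hθ.measurableSpace]) ω ∂μ
          = ∫ ω in s, stoppedValue Z (fun ω => (θ ω : WithTop ℕ)) ω ∂μ - ∫ ω in s, stoppedValue U (fun ω => (τ ω : WithTop ℕ)) ω ∂μ := by
        simp only [Pi.sub_apply]
        rw [integral_sub hfint.integrableOn integrable_condExp.integrableOn,
          setIntegral_condExp hmle hgint hs]
      rw [h1]
      have h2 : ∫ ω in s, stoppedValue U (fun ω => (τ ω : WithTop ℕ)) ω ∂μ ≤ ∫ ω in s, stoppedValue Z (fun ω => (τ ω : WithTop ℕ)) ω ∂μ := by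
        refine setIntegral_mono_on hgint.integrableOn
          (integrable_stoppedValue ℕ hτ hZint (N := T) (fun ω => by simpa using hτT ω)).integrableOn (hmle _ hs) ?_
        intro ω _
        exact snell_U_le (τ ω) (hτT ω) ω
      have h3 := (snell_key hadp hint hθ hτ hθτ hτT hs).1
      linarith
    filter_upwards [hd0] with ω h
    have : (μ[stoppedValue U (fun ω => (τ ω : WithTop ℕ)) | hθ.measurableSpace]) ω ≤ stoppedValue Z (fun ω => (θ ω : WithTop ℕ)) ω := by
      have := h
      simp only [Pi.zero_apply, Pi.sub_apply] at this
      linarith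
    exact this
  · set v : ℕ → Ω → ℝ := fun i ω => if θ ω ≤ i then Z i ω - U i ω else 1 with hvdef
    have hvadp : Adapted ℱ v := fun i =>
      Measurable.ite (show MeasurableSet[ℱ i] {ω | θ ω ≤ i} by simpa using hθ i)
          ((hZadp i).sub (hadp i)) measurable_const
    set σ : Ω → ℕ := hittingBtwn v {0} 0 T with hσdef
    have hσ : IsStoppingTime ℱ (fun ω => (σ ω : WithTop ℕ)) :=
        Adapted.isStoppingTime_hittingBtwn hvadp (measurableSet_singleton 0)
    have hZT : Z T = U T := snell_of_le μ ℱ U T le_rfl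
    have hex : ∀ ω, ∃ j ∈ Set.Icc 0 T, v j ω ∈ ({0} : Set ℝ) := fun ω =>
      ⟨T, ⟨Nat.zero_le _, le_rfl⟩, by simp [hvdef, hθT ω, hZT]⟩
    have hhit : ∀ ω, v (σ ω) ω = 0 := fun ω => hittingBtwn_mem_set (hex ω)
    have hσT : ∀ ω, σ ω ≤ T := fun ω => hittingBtwn_le ω
    have hθσ : ∀ ω, θ ω ≤ σ ω := by
      intro ω
      by_contra h
      have h1 := hhit ω
      rw [hvdef] at h1
      simp only [h, if_false] at h1
      exact one_ne_zero h1
    have hZU : ∀ ω, Z (σ ω) ω = U (σ ω) ω := by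
      intro ω
      have h1 := hhit ω
      rw [hvdef] at h1
      simp only [hθσ ω, if_true] at h1
      linarith
    have hP : ∀ ω t, θ ω ≤ t → t < σ ω → Z t ω = (μ[Z (t + 1) | ℱ t]) ω := by
      intro ω t h1 h2
      have htT : t < T := lt_of_lt_of_le h2 (hσT ω)
      have hne : v t ω ≠ 0 := by
        intro h0
        have := hittingBtwn_le_of_mem (Nat.zero_le t) htT.le
          (by rw [h0]; exact rfl : v t ω ∈ ({0} : Set ℝ))
        rw [← hσdef] at this
        omega
      rw [hvdef] at hne
      simp only [h1, if_true] at hne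
      refine snell_eq_condexp_of_ne t htT ω ?_
      intro h
      exact hne (by rw [show (snell μ ℱ U T t : Ω → ℝ) = Z t from rfl] at h; rw [h]; ring)
    refine ⟨σ, hσ, hθσ, hσT, ?_⟩
    have hgint : Integrable (stoppedValue U (fun ω => (σ ω : WithTop ℕ))) μ := integrable_stoppedValue ℕ hσ hint (N := T) (fun ω => by simpa using hσT ω)
    have heq : ∀ s : Set Ω, MeasurableSet[hθ.measurableSpace] s → μ s < ⊤ →
        ∫ ω in s, stoppedValue Z (fun ω => (θ ω : WithTop ℕ)) ω ∂μ = ∫ ω in s, stoppedValue U (fun ω => (σ ω : WithTop ℕ)) ω ∂μ := by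
      intro s hs _
      have h1 := (snell_key hadp hint hθ hσ hθσ hσT hs).2 hP
      rw [← h1]
      exact integral_congr_ae (ae_of_all _ fun ω => hZU ω)
    exact ae_eq_condExp_of_forall_setIntegral_eq hmle hgint
      (fun s _ _ => hfint.integrableOn) heq hfmeas.aestronglyMeasurable
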